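/- Let G be a DAG, let π be a path between two vertices x and y in G, and let C denote the set of colliders on π. Then every non-collider vertex on π (including the case where π has no colliders) belongs to an_G(C ∪ {x, y}); in particular, if π has no collider, every vertex on π is an ancestor of x or of y. -/

import Mathlib

/-- Adjacency in the skeleton of a digraph given by edge relation `G`. -/
def skelAdj {V : Type*} (G : V → V → Prop) (a b : V) : Prop := G a b ∨ G b a

/-- A digraph is acyclic (a DAG) if it has no directed cycle. -/
def IsAcyclicDigraph {V : Type*} (G : V → V → Prop) : Prop :=
  ∀ v, ¬ Relation.TransGen G v v

/-- A path: a list of distinct vertices in which consecutive vertices are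
joined by an edge (of either orientation). -/
def IsPath {V : Type*} (G : V → V → Prop) (p : List V) : Prop :=
  p.Nodup ∧ p.Chain' (skelAdj G)

/-- A path between `x` and `y` (written from `x` to `y`). -/
def IsPathBetween {V : Type*} (G : V → V → Prop) (x y : V) (p : List V) : Prop :=
  IsPath G p ∧ p.head? = some x ∧ p.getLast? = some y

/-- A directed (causal) path from `x` to `y`: every edge points towards `y`. -/
def IsDirPath {V : Type*} (G : V → V → Prop) (x y : V) (p : List V) : Prop :=
  p.Nodup ∧ p.Chain' G ∧ p.head? = some x ∧ p.getLast? = some y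

/-- `w` is a collider on the path `p`: both edges of `p` at `w` point into `w`. -/
def IsCollider {V : Type*} (G : V → V → Prop) (p : List V) (w : V) : Prop :=
  ∃ a b, [a, w, b] <:+: p ∧ G a w ∧ G b w

/-- Descendants of a vertex (including the vertex itself). -/
def descendants {V : Type*} (G : V → V → Prop) (v : V) : Set V :=
  {w | Relation.ReflTransGen G v w}

/-- Ancestors of a vertex (including the vertex itself). -/
def ancestors {V : Type*} (G : V → V → Prop) (v : V) : Set V :=
  {w | Relation.ReflTransGen G w v}

/-- Parents of a vertex. -/
def parents {V : Type*} (G : V → V → Prop) (v : V) : Set V := {w | G w v}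

/-- Descendants of a set of vertices. -/
def descendantsSet {V : Type*} (G : V → V → Prop) (W : Set V) : Set V :=
  ⋃ v ∈ W, descendants G v

/-- Ancestors of a set of vertices. -/
def ancestorsSet {V : Type*} (G : V → V → Prop) (W : Set V) : Set V :=
  ⋃ v ∈ W, ancestors G v

/-- Parents of a set of vertices. -/
def parentsSet {V : Type*} (G : V → V → Prop) (W : Set V) : Set V :=
  ⋃ v ∈ W, parents G v

/-- A path `p` is blocked by a vertex set `A`: it contains a non-collider in `A`,
or a collider `c` with `descendants G c ∩ A = ∅`. -/
def Blocked {V : Type*} (G : V → V → Prop) (A : Set V) (p : List V) : Prop :=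
  (∃ w ∈ p, ¬ IsCollider G p w ∧ w ∈ A) ∨
    (∃ c, IsCollider G p c ∧ descendants G c ∩ A = ∅)

/-- `cn G x y`: vertices `z ≠ x` lying on some directed path from `x` to `y`. -/
def cn {V : Type*} (G : V → V → Prop) (x y : V) : Set V :=
  {z | z ≠ x ∧ ∃ p, IsDirPath G x y p ∧ z ∈ p}

/-- The forbidden set `forb G x y = de(cn(G,x,y)) ∪ {x}`. -/
def forb {V : Type*} (G : V → V → Prop) (x y : V) : Set V :=
  descendantsSet G (cn G x y) ∪ {x}

/-- `A ⊆ V \ {x,y}` is a valid adjustment set in `G`: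
(i) `A ∩ forb(G,x,y) = ∅`, and (ii) every non-causal path from `x` to `y` is
blocked by `A`. -/
def IsValidAdjustment {V : Type*} (G : V → V → Prop) (x y : V) (A : Set V) : Prop :=
  x ∉ A ∧ y ∉ A ∧ A ∩ forb G x y = ∅ ∧
    ∀ p, IsPathBetween G x y p → ¬ p.Chain' G → Blocked G A p

/-- `rch G x y`: vertices lying on some path between `x` and `y` in the skeleton. -/
def rch {V : Type*} (G : V → V → Prop) (x y : V) : Set V :=
  {z | ∃ p, IsPathBetween G x y p ∧ z ∈ p}

/-- Induced subgraph of `G` on a vertex set `S`. -/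
def induce {V : Type*} (G : V → V → Prop) (S : Set V) : V → V → Prop :=
  fun a b => G a b ∧ a ∈ S ∧ b ∈ S

/-- `clr G x y`: all colliders on any path from `x` to `y` in the induced
subgraph of `G` on `rch G x y`. -/
def clr {V : Type*} (G : V → V → Prop) (x y : V) : Set V :=
  {c | ∃ p, IsPathBetween (induce G (rch G x y)) x y p ∧
      IsCollider (induce G (rch G x y)) p c}

/-- The optimal adjustment set `opadj G x y = pa(cn(G,x,y)) \ forb(G,x,y)`. -/
def opadj {V : Type*} (G : V → V → Prop) (x y : V) : Set V :=
  parentsSet G (cn G x y) \ forb G x y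

/-- `G^{pd}_{xy}`: `G` with every edge from `x` to a child of `x` that is an
ancestor of `y` removed. -/
def pdGraph {V : Type*} (G : V → V → Prop) (x y : V) : V → V → Prop :=
  fun a b => G a b ∧ ¬ (a = x ∧ b ∈ ancestors G y)

/-- `τ` is a topological ordering of `G`. -/
def IsTopOrder {V : Type*} (G : V → V → Prop) (τ : V → ℕ) : Prop :=
  Function.Injective τ ∧ ∀ a b, G a b → τ a < τ b

/-- `G'` is obtained from `G` by altering the position of the single node `z`
in a topological ordering of `G` (keeping the skeleton and the orientation of
all edges not incident to `z`, and reorienting edges incident to `z` according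
to the new ordering), with `x` preceding `y` in both orderings. -/
def AlterOne {V : Type*} (G G' : V → V → Prop) (z x y : V) : Prop :=
  ∃ τ τ' : V → ℕ,
    IsTopOrder G τ ∧ IsTopOrder G' τ' ∧
    τ x < τ y ∧ τ' x < τ' y ∧
    (∀ a b, a ≠ z → b ≠ z → (τ a < τ b ↔ τ' a < τ' b)) ∧
    (∀ a b, a ≠ z → b ≠ z → (G a b ↔ G' a b)) ∧
    (∀ a b, a = z ∨ b = z → (G' a b ↔ (skelAdj G a b ∧ τ' a < τ' b)))

lemma triple_infix {V : Type*} (p : List V) (i : ℕ) (h : i + 2 < p.length) :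
    [p[i], p[i+1], p[i+2]] <:+: p := by
  refine ⟨p.take i, p.drop (i+3), ?_⟩
  have h1 : p.drop i = p[i] :: p[i+1] :: p[i+2] :: p.drop (i+3) := by
    rw [List.drop_eq_getElem_cons (by omega : i < p.length),
      List.drop_eq_getElem_cons (by omega : i + 1 < p.length),
      List.drop_eq_getElem_cons (h : i + 2 < p.length)]
  calc p.take i ++ [p[i], p[i+1], p[i+2]] ++ p.drop (i+3)
      = p.take i ++ p.drop i := by rw [h1]; simp
    _ = p := List.take_append_drop i p

lemma mem_ancestorsSet_iff {V : Type*} (G : V → V → Prop) (W : Set V) (w : V) :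
    w ∈ ancestorsSet G W ↔ ∃ v ∈ W, Relation.ReflTransGen G w v := by
  simp [ancestorsSet, ancestors, Set.mem_iUnion]

lemma chain'_getElem {V : Type*} {R : V → V → Prop} {p : List V} (hc : p.Chain' R)
    (i : ℕ) (h : i + 1 < p.length) : R p[i] p[i+1] := by
  have := List.isChain_iff_getElem.mp hc i (by omega)
  simpa [List.get_eq_getElem] using this

/-- Forward claim: if the edge at `i` points forward, then `p[i]` is an
ancestor of a collider or of the final endpoint. -/
lemma forward_claim {V : Type*} (G : V → V → Prop) {p : List V}
    (hc : p.Chain' (skelAdj G)) {y : V} (hy : p.getLast? = some y) :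
    ∀ k i (h : i + 1 < p.length), p.length - i ≤ k → G p[i] p[i+1] →
      p[i] ∈ ancestorsSet G ({c | IsCollider G p c} ∪ {y}) := by
  intro k
  induction k with
  | zero => intro i h hk; omega
  | succ k ih =>
    intro i h hk hGi
    rw [mem_ancestorsSet_iff]
    by_cases hlast : i + 2 = p.length
    · -- p[i+1] is the last vertex, i.e. y
      have hne : p ≠ [] := by intro hn; simp [hn] at h
      have : p.getLast hne = y := by
        have := List.getLast?_eq_getLast hne; rw [hy] at this; exact (Option.some_injective _ this).symm
      have hyy : p[i+1] = y := by
        rw [← this, List.getLast_eq_getElem]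
        congr 1; omega
      exact ⟨y, Or.inr rfl, hyy ▸ Relation.ReflTransGen.single hGi⟩
    · have h2 : i + 2 < p.length := by omega
      rcases chain'_getElem hc (i+1) (by omega) with hf | hb
      · -- edge points onward: recurse
        have := ih (i+1) (by omega) (by omega) hf
        rw [mem_ancestorsSet_iff] at this
        obtain ⟨v, hv, hR⟩ := this
        exact ⟨v, hv, Relation.ReflTransGen.head hGi hR⟩
      · -- p[i+1] is a collider
        refine ⟨p[i+1], Or.inl ⟨p[i], p[i+2], triple_infix p i h2, hGi, hb⟩,
          Relation.ReflTransGen.single hGi⟩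

/-- Backward claim: if the edge at `i` points backward, then `p[i+1]` is an
ancestor of a collider or of the initial endpoint. -/
lemma backward_claim {V : Type*} (G : V → V → Prop) {p : List V}
    (hc : p.Chain' (skelAdj G)) {x : V} (hx : p.head? = some x) :
    ∀ i (h : i + 1 < p.length), G p[i+1] p[i] →
      p[i+1] ∈ ancestorsSet G ({c | IsCollider G p c} ∪ {x}) := by
  intro i
  induction i with
  | zero =>
    intro h hGi
    rw [mem_ancestorsSet_iff]
    have hx0 : p[0] = x := by
      cases p with
      | nil => simp at h
      | cons a t => simpa using hx
    exact ⟨x, Or.inr rfl, hx0 ▸ Relation.ReflTransGen.single hGi⟩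
  | succ j ih =>
    intro h hGi
    rw [mem_ancestorsSet_iff]
    rcases chain'_getElem hc j (by omega) with hf | hb
    · -- p[j+1] is a collider
      refine ⟨p[j+1], Or.inl ⟨p[j], p[j+2], triple_infix p j h, hf, hGi⟩,
        Relation.ReflTransGen.single hGi⟩
    · have := ih (by omega) hb
      rw [mem_ancestorsSet_iff] at this
      obtain ⟨v, hv, hR⟩ := this
      exact ⟨v, hv, Relation.ReflTransGen.head hGi hR⟩

/-- non-colliders on a path are ancestors of the colliders or of
the endpoints; in particular, on a collider-free path every vertex is an
ancestor of `x` or of `y`. -/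
theorem statement12 {V : Type*} (G : V → V → Prop) (hG : IsAcyclicDigraph G)
    (x y : V) (p : List V) (hp : IsPathBetween G x y p) :
    (∀ w ∈ p, ¬ IsCollider G p w →
      w ∈ ancestorsSet G ({c | IsCollider G p c} ∪ {x, y})) ∧
    ((∀ c, ¬ IsCollider G p c) → ∀ w ∈ p, w ∈ ancestors G x ∪ ancestors G y) := by
  obtain ⟨⟨hnd, hch⟩, hhead, hlast⟩ := hp
  have hmain : ∀ w ∈ p, ¬ IsCollider G p w →
      w ∈ ancestorsSet G ({c | IsCollider G p c} ∪ {x, y}) := by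
    intro w hw hnc
    obtain ⟨i, hi, rfl⟩ := List.mem_iff_getElem.mp hw
    rw [mem_ancestorsSet_iff]
    by_cases h0 : i = 0
    · subst h0
      have hx0 : p[0] = x := by
        cases p with
        | nil => simp at hi
        | cons a t => simpa using hhead
      exact ⟨x, Or.inr (Or.inl rfl), hx0 ▸ Relation.ReflTransGen.refl⟩
    by_cases hN : i = p.length - 1
    · have hne : p ≠ [] := by intro hn; simp [hn] at hi
      have hgl : p.getLast hne = y := by
        have := List.getLast?_eq_getLast hne; rw [hlast] at this
        exact (Option.some_injective _ this).symm
      have hyy : p[i] = y := by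
        rw [← hgl, List.getLast_eq_getElem]; congr 1
      exact ⟨y, Or.inr (Or.inr rfl), hyy ▸ Relation.ReflTransGen.refl⟩
    · have h1 : 0 < i := Nat.pos_of_ne_zero h0
      have h2 : i + 1 < p.length := by omega
      have hsub : (({c | IsCollider G p c} ∪ {y} : Set V) ∪ ({c | IsCollider G p c} ∪ {x}))
          ⊆ {c | IsCollider G p c} ∪ {x, y} := by
        intro v hv
        rcases hv with (hv | hv) | (hv | hv)
        · exact Or.inl hv
        · exact Or.inr (Or.inr hv)
        · exact Or.inl hv
        · exact Or.inr (Or.inl hv)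
      rcases chain'_getElem hch i h2 with hf | hb
      · have := forward_claim G hch hlast p.length i h2 (by omega) hf
        rw [mem_ancestorsSet_iff] at this
        obtain ⟨v, hv, hR⟩ := this
        exact ⟨v, hsub (Or.inl hv), hR⟩
      · have hi1 : i - 1 + 1 = i := by omega
        have h2' : i - 1 + 1 < p.length := by omega
        rcases chain'_getElem hch (i - 1) h2' with hf' | hb'
        · exfalso
          apply hnc
          refine ⟨p[i-1], p[i+1], ?_, ?_, ?_⟩
          · have := triple_infix p (i-1) (by omega)
            simpa [hi1, show i - 1 + 2 = i + 1 by omega] using this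
          · simpa [hi1] using hf'
          · exact hb
        · have := backward_claim G hch hhead (i-1) h2' (by simpa [hi1] using hb')
          rw [mem_ancestorsSet_iff] at this
          obtain ⟨v, hv, hR⟩ := this
          exact ⟨v, hsub (Or.inr hv), by simpa [hi1] using hR⟩
  refine ⟨hmain, ?_⟩
  intro hnocoll w hw
  have := hmain w hw (hnocoll w)
  rw [mem_ancestorsSet_iff] at this
  obtain ⟨v, hv, hR⟩ := this
  rcases hv with hv | hv | hv
  · exact absurd hv (hnocoll v)
  · exact Or.inl (show Relation.ReflTransGen G w x from hv ▸ hR)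
  · exact Or.inr (show Relation.ReflTransGen G w y from hv ▸ hR)
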